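/- Let X = {0} ∪ {1/n : n ∈ ℕ, n ≥ 1} with the metric induced from ℝ, and let U be the metric uniform structure on X generated by the entourages U_r = {(x,y) ∈ X × X : |x − y| < r} for r > 0. Then the coarse structure C(U) := ⋂_{r>0} C⟨{U_r}⟩ equals the minimal coarse structure C⟨{diag_X}⟩ generated by the diagonal; in particular, C(U) is not compatible with U (no entourage is both in C(U) and in U). -/

import Mathlib

def symmClose {α : Type*} (V : Set (α × α)) : Set (α × α) :=
  V ∪ (Prod.swap '' V) ∪ Set.diagonal α

def relPow {α : Type*} (V : Set (α × α)) : ℕ → Set (α × α)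
  | 0 => Set.diagonal α
  | n + 1 => SetRel.comp (relPow V n) V

/-- `W` belongs to the coarse structure generated by the single entourage `V`. -/
def inCoarseGen {α : Type*} (V W : Set (α × α)) : Prop := ∃ n, W ⊆ relPow (symmClose V) n

/-- The space `X = {0} ∪ {1/n : n ≥ 1} ⊆ ℝ`. -/
def XSet : Set ℝ := {x | x = 0 ∨ ∃ n : ℕ, x = 1 / (n + 1)}

/-- The metric entourage `U_r = {(x,y) : |x − y| < r}` on `X`. -/
def Ur (r : ℝ) : Set (↥XSet × ↥XSet) := {p | dist p.1 p.2 < r}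

/-- Membership in `C(𝒰) = ⋂_{r > 0} C⟨{U_r}⟩`. -/
def memCU' (W : Set (↥XSet × ↥XSet)) : Prop := ∀ r : ℝ, 0 < r → inCoarseGen (Ur r) W

lemma step_dist {r : ℝ} {c b : ↥XSet} (h : (c, b) ∈ symmClose (Ur r)) :
    c = b ∨ dist c b < r := by
  rcases h with (h | h) | h
  · exact Or.inr h
  · rcases h with ⟨q, hq, hswap⟩
    have h1 : q.2 = c := congrArg Prod.fst hswap
    have h2 : q.1 = b := congrArg Prod.snd hswap
    right
    rw [dist_comm, ← h1, ← h2]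
    exact hq
  · exact Or.inl h

/-- If `x` is isolated with radius `r`, then chains of `U_r`-steps never connect
`x` to anything else. -/
lemma isolated_chain {r : ℝ} {x : ↥XSet} (hx : ∀ z : ↥XSet, dist z x < r → z = x) :
    ∀ n (a b : ↥XSet), (a, b) ∈ relPow (symmClose (Ur r)) n → (a = x ↔ b = x) := by
  intro n
  induction n with
  | zero => intro a b h; have hab : a = b := h; rw [hab]
  | succ n ih =>
    intro a b h
    rcases h with ⟨c, hac, hcb⟩
    have h1 := ih a c hac
    have h2 : c = x ↔ b = x := by
      rcases step_dist hcb with h | h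
      · rw [h]
      · constructor
        · intro hc; subst hc
          exact hx b (by rw [dist_comm]; exact h)
        · intro hb; subst hb
          exact hx c h
    exact h1.trans h2

lemma inv_mem_XSet (k : ℕ) : (1 / ((k : ℝ) + 1)) ∈ XSet := Or.inr ⟨k, rfl⟩

lemma zero_mem_XSet : (0 : ℝ) ∈ XSet := Or.inl rfl

/-- Isolation of `1/(k+1)` with radius `1/((k+1)(k+2))`. -/
lemma isolated (k : ℕ) (z : ↥XSet)
    (h : dist z (⟨1 / ((k : ℝ) + 1), inv_mem_XSet k⟩ : ↥XSet) < 1 / (((k : ℝ) + 1) * ((k : ℝ) + 2))) :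
    z = (⟨1 / ((k : ℝ) + 1), inv_mem_XSet k⟩ : ↥XSet) := by
  have hk1 : (0 : ℝ) < (k : ℝ) + 1 := by positivity
  have hk2 : (0 : ℝ) < (k : ℝ) + 2 := by positivity
  have hd : dist (z : ℝ) (1 / ((k : ℝ) + 1)) < 1 / (((k : ℝ) + 1) * ((k : ℝ) + 2)) := h
  rw [Real.dist_eq] at hd
  rcases z.2 with hz | ⟨m, hz⟩
  · exfalso
    rw [hz] at hd
    rw [zero_sub, abs_neg, abs_of_pos (by positivity)] at hd
    have : 1 / (((k : ℝ) + 1) * ((k : ℝ) + 2)) ≤ 1 / ((k : ℝ) + 1) := by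
      apply one_div_le_one_div_of_le hk1
      nlinarith
    linarith
  · have hm : m = k := by
      by_contra hmk
      rw [hz] at hd
      have hm1 : (0 : ℝ) < (m : ℝ) + 1 := by positivity
      rcases lt_or_gt_of_ne hmk with hlt | hgt
      · -- m < k : 1/(m+1) - 1/(k+1) ≥ 1/(k(k+1)) ≥ 1/((k+1)(k+2))
        have hmk' : (m : ℝ) + 1 ≤ (k : ℝ) := by
          have : (m : ℝ) + 1 ≤ (k : ℝ) := by exact_mod_cast Nat.succ_le_of_lt hlt
          exact this
        have hkpos : (0 : ℝ) < (k : ℝ) := lt_of_lt_of_le hm1 hmk'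
        have h1 : 1 / ((k : ℝ)) ≤ 1 / ((m : ℝ) + 1) := one_div_le_one_div_of_le hm1 hmk'
        have h2 : 1 / ((m : ℝ) + 1) - 1 / ((k : ℝ) + 1) ≥ 1 / ((k : ℝ) * ((k : ℝ) + 1)) := by
          have : 1 / ((k : ℝ)) - 1 / ((k : ℝ) + 1) = 1 / ((k : ℝ) * ((k : ℝ) + 1)) := by
            field_simp; ring
          linarith
        have h3 : 1 / (((k : ℝ) + 1) * ((k : ℝ) + 2)) ≤ 1 / ((k : ℝ) * ((k : ℝ) + 1)) := by
          apply one_div_le_one_div_of_le (by positivity)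
          nlinarith
        have habs : |1 / ((m : ℝ) + 1) - 1 / ((k : ℝ) + 1)| ≥ 1 / ((m : ℝ) + 1) - 1 / ((k : ℝ) + 1) :=
          le_abs_self _
        linarith
      · -- m > k : 1/(k+1) - 1/(m+1) ≥ 1/((k+1)(k+2))
        have hmk' : (k : ℝ) + 2 ≤ (m : ℝ) + 1 := by
          have : (k : ℝ) + 1 ≤ (m : ℝ) := by exact_mod_cast Nat.succ_le_of_lt hgt
          linarith
        have h1 : 1 / ((m : ℝ) + 1) ≤ 1 / ((k : ℝ) + 2) := one_div_le_one_div_of_le hk2 hmk'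
        have h2 : 1 / ((k : ℝ) + 1) - 1 / ((k : ℝ) + 2) = 1 / (((k : ℝ) + 1) * ((k : ℝ) + 2)) := by
          field_simp; ring
        have habs : |1 / ((m : ℝ) + 1) - 1 / ((k : ℝ) + 1)| ≥ 1 / ((k : ℝ) + 1) - 1 / ((m : ℝ) + 1) := by
          rw [abs_sub_comm]; exact le_abs_self _
        linarith
    apply Subtype.ext
    simp only [hz, hm]

/-- For `X = {0} ∪ {1/n}` with the metric uniform structure, the coarse structure
`C(𝒰) = ⋂_{r>0} C⟨{U_r}⟩` equals the minimal coarse structure generated by the diagonal;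
in particular no entourage is both in `C(𝒰)` and uniform. -/
theorem stmt1 :
    (∀ W : Set (↥XSet × ↥XSet), memCU' W ↔ W ⊆ Set.diagonal ↥XSet) ∧
    ¬ ∃ U : Set (↥XSet × ↥XSet), memCU' U ∧ U ∈ uniformity ↥XSet := by
  have main : ∀ W : Set (↥XSet × ↥XSet), memCU' W ↔ W ⊆ Set.diagonal ↥XSet := by
    intro W
    constructor
    · intro hW
      intro p hp
      by_contra hne
      have hne' : p.1 ≠ p.2 := fun h => hne h
      -- one of p.1, p.2 has nonzero value, hence is of the form 1/(k+1)
      have key : ∀ (k : ℕ), (p.1 = (⟨1 / ((k : ℝ) + 1), inv_mem_XSet k⟩ : ↥XSet) ∨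
          p.2 = (⟨1 / ((k : ℝ) + 1), inv_mem_XSet k⟩ : ↥XSet)) → False := by
        intro k hk
        set x : ↥XSet := ⟨1 / ((k : ℝ) + 1), inv_mem_XSet k⟩ with hxdef
        have hr : (0 : ℝ) < 1 / (((k : ℝ) + 1) * ((k : ℝ) + 2)) := by positivity
        obtain ⟨n, hn⟩ := hW _ hr
        have hchain := isolated_chain (x := x) (isolated k) n p.1 p.2 (hn hp)
        rcases hk with h1 | h2
        · exact hne' (h1.trans (hchain.mp h1).symm)
        · exact hne' ((hchain.mpr h2).trans h2.symm)
      rcases p.1.2 with h1 | ⟨k, h1⟩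
      · rcases p.2.2 with h2 | ⟨k, h2⟩
        · exact hne' (Subtype.ext (h1.trans h2.symm))
        · exact key k (Or.inr (Subtype.ext h2))
      · exact key k (Or.inl (Subtype.ext h1))
    · intro hW r hr
      exact ⟨0, hW⟩
  refine ⟨main, ?_⟩
  rintro ⟨U, hU1, hU2⟩
  have hdiag : U ⊆ Set.diagonal ↥XSet := (main U).mp hU1
  rw [Metric.mem_uniformity_dist] at hU2
  obtain ⟨ε, hε, hball⟩ := hU2
  obtain ⟨n, hn⟩ := exists_nat_one_div_lt hε
  set a : ↥XSet := ⟨0, zero_mem_XSet⟩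
  set b : ↥XSet := ⟨1 / ((n : ℝ) + 1), inv_mem_XSet n⟩
  have hdist : dist a b < ε := by
    have : dist (a : ℝ) (b : ℝ) = 1 / ((n : ℝ) + 1) := by
      rw [Real.dist_eq]
      simp [a, b, abs_of_nonneg]
      positivity
    have hd : dist a b = 1 / ((n : ℝ) + 1) := this
    rw [hd]
    exact hn
  have hab : (a, b) ∈ U := hball hdist
  have : a = b := hdiag hab
  have : (0 : ℝ) = 1 / ((n : ℝ) + 1) := congrArg Subtype.val this
  have hpos : (0 : ℝ) < 1 / ((n : ℝ) + 1) := by positivity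
  linarith [this ▸ hpos]
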